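/- Let P ≻ 0 (n×n), B (n×m), ρ > 0 with B ≠ 0. Define ε* = ρ / σ_max, where σ_max is the largest eigenvalue of the symmetric positive semidefinite matrix P^{1/2} B Bᵀ P^{1/2}. Then ε* is the largest ε > 0 such that xᵀ P x ≤ ε implies ‖Bᵀ P x‖² ≤ ρ for all x ∈ R^n. -/

import Mathlib

open Matrix

/-- The positive semidefinite square root of a positive semidefinite matrix, with the
definition `Matrix.PosSemidef.sqrt` had in the older Mathlib (removed since). -/
noncomputable def Matrix.PosSemidef.sqrt {n : Type*} [Fintype n] [DecidableEq n]
    {A : Matrix n n ℝ} (hA : A.PosSemidef) : Matrix n n ℝ :=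
  hA.1.eigenvectorUnitary.1 * diagonal ((↑) ∘ (√·) ∘ hA.1.eigenvalues) *
  (star hA.1.eigenvectorUnitary : Matrix n n ℝ)

/-- Closed-form largest invariant ellipsoid level: `ε* = ρ/σ_max`, with `σ_max`
the largest eigenvalue of `P^{1/2} B Bᵀ P^{1/2}`, is the largest `ε > 0` such
that `xᵀPx ≤ ε` implies `‖BᵀPx‖² ≤ ρ`. -/
theorem stmt19 (n m : ℕ) (P : Matrix (Fin n) (Fin n) ℝ) (B : Matrix (Fin n) (Fin m) ℝ)
    (ρ : ℝ) (hρ : 0 < ρ) (hP : P.PosDef) (hB : B ≠ 0)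
    (σmax : ℝ)
    (hσ : IsGreatest {μ : ℝ | ∃ x : Fin n → ℝ, x ≠ 0 ∧
      (hP.posSemidef.sqrt * B * Bᵀ * hP.posSemidef.sqrt) *ᵥ x = μ • x} σmax) :
    IsGreatest {ε : ℝ | 0 < ε ∧ ∀ x : Fin n → ℝ, x ⬝ᵥ (P *ᵥ x) ≤ ε →
      (Bᵀ *ᵥ (P *ᵥ x)) ⬝ᵥ (Bᵀ *ᵥ (P *ᵥ x)) ≤ ρ} (ρ / σmax) := by
  set Q := hP.posSemidef.sqrt with hQdef
  set S := Q * B * Bᵀ * Q with hSdef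
  have hQsymm : Qᵀ = Q := by
    rw [hQdef, Matrix.PosSemidef.sqrt, transpose_mul, transpose_mul, diagonal_transpose,
      star_eq_conjTranspose, conjTranspose_eq_transpose_of_trivial,
      transpose_transpose, Matrix.mul_assoc]
  have hQQ : Q * Q = P := by
    have hU : (star hP.posSemidef.1.eigenvectorUnitary : Matrix (Fin n) (Fin n) ℝ) *
        hP.posSemidef.1.eigenvectorUnitary.1 = 1 := Unitary.coe_star_mul_self _
    conv_rhs => rw [hP.posSemidef.1.spectral_theorem, Unitary.conjStarAlgAut_apply]
    rw [hQdef, Matrix.PosSemidef.sqrt]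
    simp only [Matrix.mul_assoc]
    rw [← Matrix.mul_assoc _ (hP.posSemidef.1.eigenvectorUnitary.1), hU, Matrix.one_mul,
      ← Matrix.mul_assoc (diagonal _), diagonal_mul_diagonal]
    congr 3
    funext i
    simp only [Function.comp_apply, RCLike.ofReal_real_eq_id, id]
    exact Real.mul_self_sqrt (hP.posSemidef.eigenvalues_nonneg i)
  have hQunit : IsUnit Q := by
    have hdet : det Q * det Q = det P := by rw [← det_mul, hQQ]
    have hd : det Q ≠ 0 := by
      intro h; rw [h, mul_zero] at hdet; exact hP.det_pos.ne' hdet.symm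
    exact (Matrix.isUnit_iff_isUnit_det Q).2 hd.isUnit
  have hQsurj : Function.Surjective (Q *ᵥ ·) := mulVec_surjective_iff_isUnit.2 hQunit
  have hdot : ∀ {k l : ℕ} (A : Matrix (Fin k) (Fin l) ℝ) (v : Fin k → ℝ) (w : Fin l → ℝ),
      v ⬝ᵥ (A *ᵥ w) = (Aᵀ *ᵥ v) ⬝ᵥ w := by
    intro k l A v w
    rw [mulVec_transpose, dotProduct_mulVec]
  have hds_nonneg : ∀ {k : ℕ} (v : Fin k → ℝ), 0 ≤ v ⬝ᵥ v := fun v =>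
    Finset.sum_nonneg fun i _ => mul_self_nonneg _
  have hds_pos : ∀ {k : ℕ} (v : Fin k → ℝ), v ≠ 0 → 0 < v ⬝ᵥ v := by
    intro k v hv
    rcases (hds_nonneg v).lt_or_eq with h | h
    · exact h
    · exact absurd (dotProduct_self_eq_zero.mp h.symm) hv
  have hS_psd : S.PosSemidef := by
    have h : S = (Q * B) * (Q * B)ᴴ := by
      rw [conjTranspose_eq_transpose_of_trivial, transpose_mul, hQsymm, hSdef,
        Matrix.mul_assoc (Q * B) Bᵀ Q]
    rw [h]; exact posSemidef_self_mul_conjTranspose _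
  have hquad : ∀ y : Fin n → ℝ,
      y ⬝ᵥ (S *ᵥ y) = (Bᵀ *ᵥ (Q *ᵥ y)) ⬝ᵥ (Bᵀ *ᵥ (Q *ᵥ y)) := by
    intro y
    have h1 : S *ᵥ y = Q *ᵥ (B *ᵥ (Bᵀ *ᵥ (Q *ᵥ y))) := by
      simp [hSdef, mulVec_mulVec, Matrix.mul_assoc]
    rw [h1, hdot, hQsymm, hdot]
  have hSsymm : Sᵀ = S := by
    have h := hS_psd.1
    rwa [IsHermitian, conjTranspose_eq_transpose_of_trivial] at h
  set T := σmax • (1 : Matrix (Fin n) (Fin n) ℝ) - S with hTdef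
  have hT_herm : T.IsHermitian := by
    show (σmax • (1 : Matrix (Fin n) (Fin n) ℝ) - S).IsHermitian
    simp [IsHermitian, conjTranspose_smul, conjTranspose_eq_transpose_of_trivial, hSsymm]
  have hT_psd : T.PosSemidef := by
    apply hT_herm.posSemidef_iff_eigenvalues_nonneg.mpr
    intro i
    have hw := hT_herm.mulVec_eigenvectorBasis i
    set w : Fin n → ℝ := ⇑(hT_herm.eigenvectorBasis i) with hwdef
    have hw0 : w ≠ 0 := by
      have := hT_herm.eigenvectorBasis.orthonormal.ne_zero i
      intro h
      apply this
      ext j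
      exact congrFun h j
    have hTw : T *ᵥ w = σmax • w - S *ᵥ w := by
      simp [hTdef, sub_mulVec, smul_mulVec, one_mulVec]
    have hSw : S *ᵥ w = (σmax - hT_herm.eigenvalues i) • w := by
      rw [hTw] at hw
      rw [sub_smul, ← hw]
      abel
    have hle : σmax - hT_herm.eigenvalues i ≤ σmax := hσ.2 ⟨w, hw0, hSw⟩
    rw [Pi.zero_apply]
    linarith
  have rayleigh : ∀ y : Fin n → ℝ, y ⬝ᵥ (S *ᵥ y) ≤ σmax * (y ⬝ᵥ y) := by
    intro y
    have h := hT_psd.dotProduct_mulVec_nonneg y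
    simp only [star_trivial, hTdef, sub_mulVec, smul_mulVec, one_mulVec,
      dotProduct_sub, dotProduct_smul, smul_eq_mul] at h
    linarith
  obtain ⟨v, hv0, hv⟩ := hσ.1
  have hσ_pos : 0 < σmax := by
    obtain ⟨i, j, hij⟩ : ∃ i j, B i j ≠ 0 := by
      by_contra h
      push_neg at h
      exact hB (Matrix.ext fun i j => h i j)
    set z : Fin n → ℝ := Pi.single i (1 : ℝ) with hzdef
    have hBz : Bᵀ *ᵥ z ≠ 0 := by
      intro h
      apply hij
      have := congrFun h j
      simpa [hzdef, mulVec_single] using this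
    obtain ⟨y, hy⟩ := hQsurj z
    replace hy : Q *ᵥ y = z := hy
    have h1 : 0 < y ⬝ᵥ (S *ᵥ y) := by
      rw [hquad y, hy]
      exact hds_pos _ hBz
    have h2 := rayleigh y
    have hy0 : y ≠ 0 := by
      intro h
      apply hBz
      rw [← hy, h]
      simp
    have hyy := hds_pos y hy0
    by_contra hcon
    push_neg at hcon
    nlinarith
  constructor
  · refine ⟨div_pos hρ hσ_pos, ?_⟩
    intro x hx
    set y := Q *ᵥ x with hydef
    have hPx : P *ᵥ x = Q *ᵥ y := by rw [hydef, mulVec_mulVec, hQQ]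
    have h1 : x ⬝ᵥ (P *ᵥ x) = y ⬝ᵥ y := by rw [hPx, hdot, hQsymm]
    have h2 : (Bᵀ *ᵥ (P *ᵥ x)) ⬝ᵥ (Bᵀ *ᵥ (P *ᵥ x)) = y ⬝ᵥ (S *ᵥ y) := by
      rw [hPx, ← hquad y]
    rw [h1] at hx
    rw [h2]
    calc y ⬝ᵥ (S *ᵥ y) ≤ σmax * (y ⬝ᵥ y) := rayleigh y
      _ ≤ σmax * (ρ / σmax) := mul_le_mul_of_nonneg_left hx hσ_pos.le
      _ = ρ := by field_simp
  · rintro ε ⟨hε, hprop⟩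
    have hvv := hds_pos v hv0
    set c := Real.sqrt (ε / (v ⬝ᵥ v)) with hcdef
    have hc2 : c * c = ε / (v ⬝ᵥ v) := Real.mul_self_sqrt (by positivity)
    obtain ⟨x, hx⟩ := hQsurj (c • v)
    replace hx : Q *ᵥ x = c • v := hx
    have hPx : P *ᵥ x = Q *ᵥ (c • v) := by rw [← hx, mulVec_mulVec, hQQ]
    have h1 : x ⬝ᵥ (P *ᵥ x) = (c • v) ⬝ᵥ (c • v) := by
      rw [hPx, hdot, hQsymm, hx]
    have hval : (c • v) ⬝ᵥ (c • v) = ε := by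
      rw [smul_dotProduct, dotProduct_smul, smul_eq_mul, smul_eq_mul, ← mul_assoc, hc2]
      field_simp
    have h2 := hprop x (by rw [h1, hval])
    have h3 : (Bᵀ *ᵥ (P *ᵥ x)) ⬝ᵥ (Bᵀ *ᵥ (P *ᵥ x)) = σmax * ε := by
      rw [hPx, ← hquad (c • v)]
      have hScv : S *ᵥ (c • v) = c • (σmax • v) := by
        rw [mulVec_smul, hv]
      rw [hScv, smul_dotProduct, dotProduct_smul, dotProduct_smul,
        smul_eq_mul, smul_eq_mul, smul_eq_mul]
      rw [show c * (c * (σmax * (v ⬝ᵥ v))) = (c * c) * σmax * (v ⬝ᵥ v) by ring, hc2]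
      field_simp
    rw [h3] at h2
    rw [le_div_iff₀ hσ_pos]
    linarith
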